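/- Let π_n = λ_n n^{−(3−τ)/2} with λ_n → 0, and fix K ≥ 1. Consider the random graph on [n] in which each pair {u,v}, u ≠ v, is an edge independently with probability π_n (1 − e^{−w_u w_v/ℓ_n}). Then the probability that some pair 1 ≤ i < j ≤ K is joined by a path of length two tends to 0 as n → ∞. -/

import Mathlib

open MeasureTheory Real Filter
open scoped ENNReal NNReal

noncomputable section

/-- `α = 1/(τ−1)`. -/
def alphaOf (τ : ℝ) : ℝ := 1 / (τ - 1)

/-- `μ = c_F/(1−α)`. -/
def muOf (τ cF : ℝ) : ℝ := cF / (1 - alphaOf τ)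

/-- `A_α = ∫_0^∞ (1 − e^{−z}) z^{−1/α} dz`. -/
def AalphaOf (τ : ℝ) : ℝ :=
  ∫ z in Set.Ioi (0 : ℝ), (1 - Real.exp (-z)) * z ^ (-(1 / alphaOf τ))

/-- `B_α = c_F^{2/α} A_α/(α μ^{1/α})`. -/
def BalphaOf (τ cF : ℝ) : ℝ :=
  cF ^ (2 / alphaOf τ) * AalphaOf τ / (alphaOf τ * muOf τ cF ^ (1 / alphaOf τ))

/-- `λ_c = √(η/(4B_α))` with `η = 2α−1`. -/
def lambdaC (τ cF : ℝ) : ℝ :=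
  Real.sqrt ((2 * alphaOf τ - 1) / (4 * BalphaOf τ cF))

/-- `h(x,y) = B_α (min x y)^{−(1−α)} (max x y)^{−α}`. -/
def hOf (τ cF : ℝ) (x y : ℝ) : ℝ :=
  BalphaOf τ cF * (min x y) ^ (-(1 - alphaOf τ)) * (max x y) ^ (-alphaOf τ)

/-- `θ_i = c_F i^{−α}/μ`. -/
def thetaOf (τ cF : ℝ) (i : ℕ) : ℝ := cF * (i : ℝ) ^ (-alphaOf τ) / muOf τ cF

/-- `Θ_i(x) = 1 − exp(−c_F θ_i x^{−α})`. -/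
def ThetaOf (τ cF : ℝ) (i : ℕ) (x : ℝ) : ℝ :=
  1 - Real.exp (-(cF * thetaOf τ cF i * x ^ (-alphaOf τ)))

/-- `λ_{ij} = λ² ∫_0^∞ Θ_i(x) Θ_j(x) dx`. -/
def lamIJ (τ cF lam : ℝ) (i j : ℕ) : ℝ :=
  lam ^ 2 * ∫ x in Set.Ioi (0 : ℝ), ThetaOf τ cF i x * ThetaOf τ cF j x

/-- The weight `w_i = c_F (n/i)^α` of vertex `i ∈ [n]`. -/
def wFn (τ cF : ℝ) (n i : ℕ) : ℝ := cF * ((n : ℝ) / (i : ℝ)) ^ alphaOf τ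

/-- The total weight `ℓ_n = ∑_{i ∈ [n]} w_i`. -/
def ellFn (τ cF : ℝ) (n : ℕ) : ℝ := ∑ i ∈ Finset.Icc 1 n, wFn τ cF n i

/-- The critical percolation probability `π_c(λ) = λ n^{−(3−τ)/2}`. -/
def piC (τ lam : ℝ) (n : ℕ) : ℝ := lam * (n : ℝ) ^ (-((3 - τ) / 2))

/-- The (clipped) edge-retention probability of the percolated Norros–Reittu model:
each pair `{u,v}` is an edge with probability `π (1 − e^{−w_u w_v/ℓ_n})`. -/
def edgeP (τ cF pr : ℝ) (n u v : ℕ) : ℝ≥0∞ :=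
  min (ENNReal.ofReal (pr * (1 - Real.exp (-(wFn τ cF n u * wFn τ cF n v / ellFn τ cF n))))) 1

/-- The law of the percolated Norros–Reittu random graph on `[n]` (vertex `u : Fin n`
carries the label `u+1 ∈ [n]`), realized as an independent product of Bernoulli
coordinates indexed by ordered pairs; only the sorted coordinates are used. -/
def graphMeasure (τ cF pr : ℝ) (n : ℕ) : MeasureTheory.Measure (Fin n × Fin n → Bool) :=
  MeasureTheory.Measure.pi fun e =>
    (PMF.bernoulli (edgeP τ cF pr n ((min e.1 e.2).val + 1) ((max e.1 e.2).val + 1)).toNNReal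
      (le_of_le_of_eq (ENNReal.toNNReal_mono ENNReal.one_ne_top (min_le_right _ _))
        ENNReal.toNNReal_one)).toMeasure

/-- Adjacency in the percolated graph: `u ≠ v` and the edge `{u,v}` is retained. -/
def NRAdj (n : ℕ) (ω : Fin n × Fin n → Bool) (u v : Fin n) : Prop :=
  u ≠ v ∧ ω (min u v, max u v) = true

/-- Existence of a self-avoiding path of length `k` joining `i` and `j`. -/
def hasPath (n : ℕ) (ω : Fin n × Fin n → Bool) (k : ℕ) (i j : Fin n) : Prop :=
  ∃ q : Fin (k + 1) → Fin n, Function.Injective q ∧ q 0 = i ∧ q (Fin.last k) = j ∧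
    ∀ r : Fin k, NRAdj n ω (q r.castSucc) (q r.succ)

/-! ### Auxiliary lemmas -/

private lemma mvt_step' (q : ℝ) (hq : 0 < q) (x : ℝ) (hx : 1 ≤ x) :
    q * (x + 1) ^ (-q - 1) ≤ x ^ (-q) - (x + 1) ^ (-q) := by
  have hx0 : 0 < x := lt_of_lt_of_le one_pos hx
  obtain ⟨c, hc, hceq⟩ := exists_hasDerivAt_eq_slope (fun t : ℝ => t ^ (-q))
    (fun t : ℝ => (-q) * t ^ (-q - 1)) (by linarith : x < x + 1)
    (by
      intro t ht
      have ht0 : t ≠ 0 := ne_of_gt (lt_of_lt_of_le hx0 ht.1)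
      exact (Real.continuousAt_rpow_const t (-q) (Or.inl ht0)).continuousWithinAt)
    (by
      intro t ht
      exact Real.hasDerivAt_rpow_const (Or.inl (ne_of_gt (lt_trans hx0 ht.1))))
  have hc0 : 0 < c := lt_trans hx0 hc.1
  have hmono : (x + 1) ^ (-q - 1) ≤ c ^ (-q - 1) :=
    Real.rpow_le_rpow_of_nonpos hc0 hc.2.le (by linarith)
  have heq : x ^ (-q) - (x + 1) ^ (-q) = q * c ^ (-q - 1) := by
    have h1 : (x + 1) - x = 1 := by ring
    rw [h1, div_one] at hceq
    linarith [hceq]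
  rw [heq]
  exact mul_le_mul_of_nonneg_left hmono hq.le

private lemma telescope_sum' (q : ℝ) (m n : ℕ) :
    ∑ k ∈ Finset.Icc (m + 2) n,
        ((((k - 1 : ℕ)) : ℝ) ^ (-q) - ((k : ℕ) : ℝ) ^ (-q))
      ≤ ((m + 1 : ℕ) : ℝ) ^ (-q) := by
  rw [← Finset.Ico_add_one_right_eq_Icc, Finset.sum_Ico_eq_sum_range]
  have hcong : ∀ i ∈ Finset.range (n + 1 - (m + 2)),
      ((((m + 2 + i - 1 : ℕ)) : ℝ) ^ (-q) - ((m + 2 + i : ℕ) : ℝ) ^ (-q))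
        = (fun j => (((m + 1 + j : ℕ) : ℝ) ^ (-q))) i
          - (fun j => (((m + 1 + j : ℕ) : ℝ) ^ (-q))) (i + 1) := by
    intro i _
    have h1 : m + 2 + i - 1 = m + 1 + i := by omega
    have h2 : m + 2 + i = m + 1 + (i + 1) := by omega
    rw [h1, h2]
  rw [Finset.sum_congr rfl hcong, Finset.sum_range_sub']
  have : (0:ℝ) ≤ ((m + 1 + (n + 1 - (m + 2)) : ℕ) : ℝ) ^ (-q) :=
    Real.rpow_nonneg (by positivity) _
  linarith

private lemma tail_sum' (q : ℝ) (hq : 0 < q) (m n : ℕ) :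
    ∑ k ∈ Finset.Icc (m + 2) n, ((k : ℝ)) ^ (-q - 1) ≤ ((m + 1 : ℕ) : ℝ) ^ (-q) / q := by
  have key : ∀ k ∈ Finset.Icc (m + 2) n,
      ((k : ℝ)) ^ (-q - 1) ≤ ((((k - 1 : ℕ)) : ℝ) ^ (-q) - ((k : ℕ) : ℝ) ^ (-q)) / q := by
    intro k hk
    have hk2 : m + 2 ≤ k := (Finset.mem_Icc.mp hk).1
    have hx : (1 : ℝ) ≤ ((k - 1 : ℕ) : ℝ) := by
      have : 1 ≤ k - 1 := by omega
      exact_mod_cast this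
    have hcast : ((k - 1 : ℕ) : ℝ) + 1 = (k : ℝ) := by
      have h : (k - 1) + 1 = k := by omega
      exact_mod_cast congrArg (fun j : ℕ => (j : ℝ)) h
    have hm := mvt_step' q hq ((k - 1 : ℕ) : ℝ) hx
    rw [hcast] at hm
    rw [le_div_iff₀ hq]
    linarith
  calc ∑ k ∈ Finset.Icc (m + 2) n, ((k : ℝ)) ^ (-q - 1)
      ≤ ∑ k ∈ Finset.Icc (m + 2) n, ((((k - 1 : ℕ)) : ℝ) ^ (-q) - ((k : ℕ) : ℝ) ^ (-q)) / q :=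
        Finset.sum_le_sum key
    _ = (∑ k ∈ Finset.Icc (m + 2) n, ((((k - 1 : ℕ)) : ℝ) ^ (-q) - ((k : ℕ) : ℝ) ^ (-q))) / q :=
        (Finset.sum_div _ _ _).symm
    _ ≤ ((m + 1 : ℕ) : ℝ) ^ (-q) / q := by gcongr; exact telescope_sum' q m n

private lemma S_bound' (α : ℝ) (hα1 : 1/2 < α) (hα2 : α < 1) (a : ℝ) (ha : 0 ≤ a) (n : ℕ) :
    ∑ k ∈ Finset.Icc 1 n, (min 1 (a * (k:ℝ) ^ (-α))) ^ 2
      ≤ (a ^ (1/α) + 2) * (1 + 1/(2*α - 1)) := by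
  have hα0 : 0 < α := by linarith
  have hq : 0 < 2*α - 1 := by linarith
  set q : ℝ := 2*α - 1 with hqdef
  set b : ℝ := a ^ (1/α) with hbdef
  have hb0 : 0 ≤ b := Real.rpow_nonneg ha _
  set m : ℕ := ⌈b⌉₊ with hmdef
  have hbm : b ≤ (m:ℝ) + 1 := le_trans (Nat.le_ceil b) (by linarith)
  have hterm_le_one : ∀ k : ℕ, (min 1 (a * (k:ℝ) ^ (-α))) ^ 2 ≤ 1 := by
    intro k
    have h1 : min 1 (a * (k:ℝ) ^ (-α)) ≤ 1 := min_le_left _ _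
    have h0 : 0 ≤ min 1 (a * (k:ℝ) ^ (-α)) :=
      le_min zero_le_one (mul_nonneg ha (Real.rpow_nonneg (Nat.cast_nonneg k) _))
    nlinarith
  have hterm_nonneg : ∀ k : ℕ, 0 ≤ (min 1 (a * (k:ℝ) ^ (-α))) ^ 2 := fun k => sq_nonneg _
  have hsub : Finset.Icc 1 n ⊆ Finset.Icc 1 (m+1) ∪ Finset.Icc (m+2) n := by
    intro k hk
    simp only [Finset.mem_Icc, Finset.mem_union] at *
    omega
  have hdisj : Disjoint (Finset.Icc 1 (m+1)) (Finset.Icc (m+2) n) := by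
    rw [Finset.disjoint_left]
    intro k hk hk'
    simp only [Finset.mem_Icc] at *
    omega
  calc ∑ k ∈ Finset.Icc 1 n, (min 1 (a * (k:ℝ) ^ (-α))) ^ 2
      ≤ ∑ k ∈ Finset.Icc 1 (m+1) ∪ Finset.Icc (m+2) n, (min 1 (a * (k:ℝ) ^ (-α))) ^ 2 :=
        Finset.sum_le_sum_of_subset_of_nonneg hsub (fun k _ _ => hterm_nonneg k)
    _ = (∑ k ∈ Finset.Icc 1 (m+1), (min 1 (a * (k:ℝ) ^ (-α))) ^ 2)
        + ∑ k ∈ Finset.Icc (m+2) n, (min 1 (a * (k:ℝ) ^ (-α))) ^ 2 :=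
        Finset.sum_union hdisj
    _ ≤ ((m:ℝ)+1) + ((m:ℝ)+1)/q := by
        gcongr ?_ + ?_
        · calc ∑ k ∈ Finset.Icc 1 (m+1), (min 1 (a * (k:ℝ) ^ (-α))) ^ 2
              ≤ ∑ _k ∈ Finset.Icc 1 (m+1), (1:ℝ) :=
                Finset.sum_le_sum (fun k _ => hterm_le_one k)
            _ = ((m:ℝ)+1) := by
                rw [Finset.sum_const, Nat.card_Icc]
                simp
        · calc ∑ k ∈ Finset.Icc (m+2) n, (min 1 (a * (k:ℝ) ^ (-α))) ^ 2
              ≤ ∑ k ∈ Finset.Icc (m+2) n, ((m:ℝ)+1) ^ (2*α) * (k:ℝ) ^ (-q-1) := by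
                apply Finset.sum_le_sum
                intro k hk
                have hk1 : 1 ≤ k := by
                  have := (Finset.mem_Icc.mp hk).1; omega
                have hkpos : (0:ℝ) < (k:ℝ) := by exact_mod_cast Nat.pos_of_ne_zero (by omega)
                have h1 : min 1 (a * (k:ℝ) ^ (-α)) ≤ a * (k:ℝ) ^ (-α) := min_le_right _ _
                have h0 : 0 ≤ min 1 (a * (k:ℝ) ^ (-α)) :=
                  le_min zero_le_one (mul_nonneg ha (Real.rpow_nonneg hkpos.le _))
                have hsq : (min 1 (a * (k:ℝ) ^ (-α))) ^ 2 ≤ (a * (k:ℝ) ^ (-α)) ^ 2 := by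
                  nlinarith
                refine hsq.trans ?_
                have hab : a ≤ ((m:ℝ)+1) ^ α := by
                  have h := Real.rpow_le_rpow hb0 hbm hα0.le
                  rw [hbdef, ← Real.rpow_mul ha, one_div, inv_mul_cancel₀ hα0.ne',
                    Real.rpow_one] at h
                  exact h
                have hknn : (0:ℝ) ≤ (k:ℝ) ^ (-α) := Real.rpow_nonneg hkpos.le _
                have e1 : ((m:ℝ)+1) ^ (2*α) = (((m:ℝ)+1) ^ α) ^ 2 := by
                  rw [← Real.rpow_natCast (((m:ℝ)+1) ^ α) 2,
                    ← Real.rpow_mul (by positivity : (0:ℝ) ≤ (m:ℝ)+1)]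
                  norm_num [mul_comm]
                have e2 : (k:ℝ) ^ (-q-1) = ((k:ℝ) ^ (-α)) ^ 2 := by
                  rw [← Real.rpow_natCast ((k:ℝ) ^ (-α)) 2, ← Real.rpow_mul hkpos.le]
                  congr 1
                  rw [hqdef]; push_cast; ring
                rw [e1, e2, ← mul_pow]
                exact pow_le_pow_left₀ (mul_nonneg ha hknn)
                  (mul_le_mul_of_nonneg_right hab hknn) 2
            _ = ((m:ℝ)+1) ^ (2*α) * ∑ k ∈ Finset.Icc (m+2) n, (k:ℝ) ^ (-q-1) := by
                rw [Finset.mul_sum]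
            _ ≤ ((m:ℝ)+1) ^ (2*α) * (((m + 1 : ℕ):ℝ) ^ (-q) / q) := by
                apply mul_le_mul_of_nonneg_left (tail_sum' q hq m n)
                positivity
            _ = ((m:ℝ)+1)/q := by
                push_cast
                rw [← mul_div_assoc, ← Real.rpow_add (by positivity : (0:ℝ) < (m:ℝ)+1)]
                norm_num [hqdef]
    _ ≤ (b + 2) * (1 + 1/q) := by
        have hmb : (m:ℝ) < b + 1 := Nat.ceil_lt_add_one hb0
        have h1q : (0:ℝ) ≤ 1 + 1/q := by positivity
        have heq : (m:ℝ)+1 + ((m:ℝ)+1)/q = ((m:ℝ)+1) * (1 + 1/q) := by ring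
        rw [heq]
        exact mul_le_mul_of_nonneg_right (by linarith) h1q

private lemma graphMeasure_pair (τ cF pr : ℝ) (n : ℕ) (a b : Fin n × Fin n) (hab : a ≠ b) :
    graphMeasure τ cF pr n {ω | ω a = true ∧ ω b = true}
      = edgeP τ cF pr n ((min a.1 a.2).val + 1) ((max a.1 a.2).val + 1)
        * edgeP τ cF pr n ((min b.1 b.2).val + 1) ((max b.1 b.2).val + 1) := by
  classical
  set P : Fin n × Fin n → ℝ≥0∞ := fun e =>
    edgeP τ cF pr n ((min e.1 e.2).val + 1) ((max e.1 e.2).val + 1) with hP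
  have hset : {ω : Fin n × Fin n → Bool | ω a = true ∧ ω b = true}
      = Set.pi Set.univ (fun e => if e = a ∨ e = b then ({true} : Set Bool) else Set.univ) := by
    ext ω
    simp only [Set.mem_setOf_eq, Set.mem_pi, Set.mem_univ, forall_true_left]
    constructor
    · rintro ⟨h1, h2⟩ e
      by_cases h : e = a ∨ e = b
      · rcases h with rfl | rfl <;> simp [h1, h2]
      · simp [h]
    · intro h
      have ha := h a
      have hb := h b
      simp at ha hb
      exact ⟨ha, hb⟩
  rw [graphMeasure, hset, Measure.pi_pi]
  have hfac : ∀ e : Fin n × Fin n,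
      (PMF.bernoulli (P e).toNNReal
        (le_of_le_of_eq (ENNReal.toNNReal_mono ENNReal.one_ne_top (min_le_right _ _))
          ENNReal.toNNReal_one)).toMeasure
          (if e = a ∨ e = b then ({true} : Set Bool) else Set.univ)
        = if e = a ∨ e = b then P e else 1 := by
    intro e
    by_cases h : e = a ∨ e = b
    · simp only [h, if_true]
      rw [PMF.toMeasure_apply_singleton _ _ (measurableSet_singleton true)]
      simp only [PMF.bernoulli_apply, cond_true]
      exact ENNReal.coe_toNNReal (ne_top_of_le_ne_top ENNReal.one_ne_top (min_le_right _ _))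
    · simp only [h, if_false]
      exact measure_univ
  rw [Finset.prod_congr rfl (fun e _ => hfac e)]
  rw [← Finset.prod_subset (Finset.subset_univ ({a, b} : Finset (Fin n × Fin n)))
    (fun e _ he => by
      simp only [Finset.mem_insert, Finset.mem_singleton] at he
      push_neg at he
      simp [he.1, he.2])]
  rw [Finset.prod_insert (by simpa using hab), Finset.prod_singleton]
  rw [if_pos (Or.inl rfl), if_pos (Or.inr rfl)]

private lemma pair_ne' {A : Type*} [LinearOrder A] {u v z : A}
    (huv : u ≠ v) (huz : u ≠ z) (hzv : z ≠ v) :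
    ((min u z, max u z) : A × A) ≠ (min z v, max z v) := by
  intro h
  rw [Prod.mk.injEq] at h
  rcases le_total u z with h1 | h1 <;> rcases le_total z v with h2 | h2
  · rw [min_eq_left h1, min_eq_left h2] at h
    exact huz h.1
  · rw [min_eq_left h1, min_eq_right h2] at h
    exact huv h.1
  · rw [max_eq_left h1, max_eq_right h2] at h
    exact huv h.2
  · rw [min_eq_right h1, min_eq_right h2] at h
    exact hzv h.1

private lemma wFn_nonneg' (τ cF : ℝ) (hcF : 0 ≤ cF) (n i : ℕ) : 0 ≤ wFn τ cF n i :=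
  mul_nonneg hcF (Real.rpow_nonneg (div_nonneg (Nat.cast_nonneg n) (Nat.cast_nonneg i)) _)

private lemma ellFn_nonneg' (τ cF : ℝ) (hcF : 0 ≤ cF) (n : ℕ) : 0 ≤ ellFn τ cF n :=
  Finset.sum_nonneg fun i _ => wFn_nonneg' τ cF hcF n i

private lemma edgeP_le' (τ cF pr : ℝ) (hcF : 0 ≤ cF) (hpr : 0 ≤ pr) (n u v : ℕ) :
    edgeP τ cF pr n u v
      ≤ ENNReal.ofReal (pr * min 1 (wFn τ cF n u * wFn τ cF n v / ellFn τ cF n)) := by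
  set x := wFn τ cF n u * wFn τ cF n v / ellFn τ cF n with hx
  have hx0 : 0 ≤ x := div_nonneg
    (mul_nonneg (wFn_nonneg' _ _ hcF _ _) (wFn_nonneg' _ _ hcF _ _)) (ellFn_nonneg' _ _ hcF _)
  refine (min_le_left _ _).trans (ENNReal.ofReal_le_ofReal ?_)
  refine mul_le_mul_of_nonneg_left ?_ hpr
  refine le_min (by linarith [Real.exp_nonneg (-x)]) ?_
  have h := Real.add_one_le_exp (-x)
  linarith

private lemma ellFn_ge' (τ cF : ℝ) (hcF : 0 ≤ cF) (hα : 0 ≤ alphaOf τ) (n : ℕ) :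
    cF * n ≤ ellFn τ cF n := by
  have h : ∀ i ∈ Finset.Icc 1 n, cF ≤ wFn τ cF n i := by
    intro i hi
    rw [Finset.mem_Icc] at hi
    have hi0 : (0:ℝ) < (i:ℝ) := by exact_mod_cast hi.1
    have h1 : (1:ℝ) ≤ (n:ℝ)/(i:ℝ) := by
      rw [le_div_iff₀ hi0, one_mul]
      exact_mod_cast hi.2
    calc cF = cF * 1 := (mul_one cF).symm
      _ ≤ cF * ((n:ℝ)/(i:ℝ)) ^ alphaOf τ :=
        mul_le_mul_of_nonneg_left (Real.one_le_rpow h1 hα) hcF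
  have h2 := Finset.card_nsmul_le_sum (Finset.Icc 1 n) (wFn τ cF n) cF h
  rw [Nat.card_Icc, nsmul_eq_mul, Nat.add_sub_cancel] at h2
  rw [mul_comm]
  exact h2

private lemma ratio_le' (τ cF : ℝ) (hcF : 0 < cF) (hα : 0 ≤ alphaOf τ) (n u z : ℕ)
    (hn : 1 ≤ n) (hu1 : 1 ≤ u) (hun : u ≤ n) (hz1 : 1 ≤ z) :
    wFn τ cF n u * wFn τ cF n z / ellFn τ cF n
      ≤ (cF * (n:ℝ) ^ (2 * alphaOf τ - 1)) * (z:ℝ) ^ (-alphaOf τ) := by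
  set α := alphaOf τ
  have hn0 : (0:ℝ) < n := by exact_mod_cast hn
  have hz0 : (0:ℝ) < z := by exact_mod_cast hz1
  have hell : cF * n ≤ ellFn τ cF n := ellFn_ge' τ cF hcF.le hα n
  have hellpos : 0 < cF * (n:ℝ) := by positivity
  have hwu : wFn τ cF n u ≤ cF * (n:ℝ) ^ α := by
    unfold wFn
    refine mul_le_mul_of_nonneg_left ?_ hcF.le
    refine Real.rpow_le_rpow (by positivity) ?_ hα
    exact div_le_self hn0.le (by exact_mod_cast hu1)
  have hwz : wFn τ cF n z = cF * ((n:ℝ) ^ α * (z:ℝ) ^ (-α)) := by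
    unfold wFn
    rw [Real.div_rpow hn0.le hz0.le, Real.rpow_neg hz0.le, div_eq_mul_inv]
  have hnum : wFn τ cF n u * wFn τ cF n z
      ≤ (cF * (n:ℝ)^α) * (cF * ((n:ℝ)^α * (z:ℝ)^(-α))) := by
    rw [hwz]
    exact mul_le_mul_of_nonneg_right hwu (by positivity)
  calc wFn τ cF n u * wFn τ cF n z / ellFn τ cF n
      ≤ (cF * (n:ℝ)^α) * (cF * ((n:ℝ)^α * (z:ℝ)^(-α))) / (cF * n) :=
        div_le_div₀ (by positivity) hnum hellpos hell
    _ = (cF * (n:ℝ) ^ (2*α - 1)) * (z:ℝ) ^ (-α) := by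
        rw [show (2*α - 1) = α + α - 1 by ring, Real.rpow_sub hn0, Real.rpow_add hn0,
          Real.rpow_one]
        field_simp

private lemma edge_bound' (τ cF pr : ℝ) (hcF : 0 < cF) (hα : 0 ≤ alphaOf τ) (hpr : 0 ≤ pr)
    (n : ℕ) (u z : Fin n) :
    edgeP τ cF pr n ((min u z).val + 1) ((max u z).val + 1)
      ≤ ENNReal.ofReal (pr * min 1 ((cF * (n:ℝ) ^ (2 * alphaOf τ - 1))
          * (((z.val + 1 : ℕ)):ℝ) ^ (-alphaOf τ))) := by
  have hn : 1 ≤ n := u.pos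
  have huval := u.isLt
  have hzval := z.isLt
  refine (edgeP_le' τ cF pr hcF.le hpr n _ _).trans (ENNReal.ofReal_le_ofReal ?_)
  refine mul_le_mul_of_nonneg_left (min_le_min le_rfl ?_) hpr
  rcases le_total u z with h | h
  · rw [min_eq_left h, max_eq_right h]
    exact ratio_le' τ cF hcF hα n (u.val+1) (z.val+1) hn (by omega) (by omega) (by omega)
  · rw [min_eq_right h, max_eq_left h, mul_comm (wFn τ cF n (z.val+1))]
    exact ratio_le' τ cF hcF hα n (u.val+1) (z.val+1) hn (by omega) (by omega) (by omega)

/-- Let `π_n = λ_n n^{−(3−τ)/2}` with `λ_n → 0`, and fix `K ≥ 1`. In the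
random graph on `[n]` where each pair `{u,v}` is independently an edge with probability
`π_n (1 − e^{−w_u w_v/ℓ_n})`, the probability that some pair `1 ≤ i < j ≤ K` is joined by
a path of length two tends to `0` as `n → ∞`. (Vertex `u : Fin n` carries label `u+1`.) -/
theorem stmt14 (τ cF : ℝ) (hτ : τ ∈ Set.Ioo (2 : ℝ) 3) (hcF : 0 < cF)
    (K : ℕ) (hK : 1 ≤ K)
    (lamn : ℕ → ℝ) (hnonneg : ∀ n, 0 ≤ lamn n) (hto0 : Tendsto lamn atTop (nhds 0)) :
    Tendsto
      (fun n : ℕ =>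
        graphMeasure τ cF (lamn n * (n : ℝ) ^ (-((3 - τ) / 2))) n
          {ω | ∃ u v z : Fin n, u < v ∧ (v : ℕ) + 1 ≤ K ∧ NRAdj n ω u z ∧ NRAdj n ω z v})
      atTop (nhds 0) := by
  classical
  obtain ⟨hτ2, hτ3⟩ := hτ
  have hτ1 : (0:ℝ) < τ - 1 := by linarith
  have hα1 : 1/2 < alphaOf τ := by
    rw [alphaOf, div_lt_div_iff₀ (by norm_num) hτ1]
    linarith
  have hα2 : alphaOf τ < 1 := by
    rw [alphaOf, div_lt_one hτ1]
    linarith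
  have hα0 : 0 < alphaOf τ := by linarith
  set α := alphaOf τ with hαdef
  have hexp : (2*α - 1) * (1/α) = 3 - τ := by
    rw [hαdef, alphaOf]
    field_simp
    ring
  set C₂ : ℝ := (cF ^ (1/α) + 2) * (1 + 1/(2*α - 1)) with hC₂
  set r : ℕ → ℝ := fun n => (K:ℝ) * ((K:ℝ) * (lamn n ^ 2 * C₂)) with hr
  have hrto : Tendsto r atTop (nhds 0) := by
    have h2 : Tendsto (fun n => lamn n ^ 2) atTop (nhds 0) := by
      have := hto0.mul hto0
      rw [mul_zero] at this
      simpa [pow_two] using this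
    have h3 : Tendsto (fun n => (K:ℝ) * ((K:ℝ) * (lamn n ^ 2 * C₂))) atTop
        (nhds ((K:ℝ) * ((K:ℝ) * (0 * C₂)))) :=
      (((h2.mul_const C₂).const_mul (K:ℝ)).const_mul (K:ℝ))
    simpa using h3
  have hofReal : Tendsto (fun n => ENNReal.ofReal (r n)) atTop (nhds 0) := by
    have := ENNReal.tendsto_ofReal hrto
    simpa using this
  refine tendsto_of_tendsto_of_tendsto_of_le_of_le' tendsto_const_nhds hofReal
    (Filter.Eventually.of_forall (fun n => zero_le)) ?_
  rw [eventually_atTop]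
  refine ⟨1, fun n hn1 => ?_⟩
  -- main bound for fixed n ≥ 1
  set pr : ℝ := lamn n * (n:ℝ) ^ (-((3 - τ)/2)) with hprdef
  have hn0 : (0:ℝ) < n := by exact_mod_cast hn1
  have hnpow0 : 0 ≤ (n:ℝ) ^ (-((3 - τ)/2)) := Real.rpow_nonneg hn0.le _
  have hpr0 : 0 ≤ pr := mul_nonneg (hnonneg n) hnpow0
  set a : ℝ := cF * (n:ℝ) ^ (2*α - 1) with ha
  have ha0 : 0 ≤ a := by positivity
  set T : ℕ → ℝ := fun k => min 1 (a * (k:ℝ) ^ (-α)) with hT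
  have hT0 : ∀ k, 0 ≤ T k := fun k =>
    le_min zero_le_one (mul_nonneg ha0 (Real.rpow_nonneg (Nat.cast_nonneg k) _))
  set F : Fin n × Fin n × Fin n → ℝ≥0∞ :=
    fun t => ENNReal.ofReal (pr^2 * T (t.2.2.val+1)^2) with hF
  set S : Finset (Fin n × Fin n × Fin n) := Finset.univ.filter
    (fun t => t.1 ≠ t.2.1 ∧ t.1 ≠ t.2.2 ∧ t.2.2 ≠ t.2.1 ∧ t.1.val < K ∧ t.2.1.val < K)
    with hS
  set C : Fin n × Fin n × Fin n → Set (Fin n × Fin n → Bool) := fun t =>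
    {ω | ω (min t.1 t.2.2, max t.1 t.2.2) = true
      ∧ ω (min t.2.2 t.2.1, max t.2.2 t.2.1) = true} with hC
  have hsubset : {ω : Fin n × Fin n → Bool |
      ∃ u v z : Fin n, u < v ∧ (v : ℕ) + 1 ≤ K ∧ NRAdj n ω u z ∧ NRAdj n ω z v}
        ⊆ ⋃ t ∈ S, C t := by
    rintro ω ⟨u, v, z, huv, hvK, ⟨huz, he1⟩, ⟨hzv, he2⟩⟩
    have htS : (u, v, z) ∈ S := by
      rw [hS, Finset.mem_filter]
      refine ⟨Finset.mem_univ _, ne_of_lt huv, huz, hzv, ?_, ?_⟩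
      · show u.val < K
        have := Fin.lt_def.mp huv
        omega
      · show v.val < K
        omega
    exact Set.mem_biUnion htS ⟨he1, he2⟩
  have hstep1 : graphMeasure τ cF pr n {ω : Fin n × Fin n → Bool |
      ∃ u v z : Fin n, u < v ∧ (v : ℕ) + 1 ≤ K ∧ NRAdj n ω u z ∧ NRAdj n ω z v}
        ≤ ∑ t ∈ S, graphMeasure τ cF pr n (C t) :=
    (measure_mono hsubset).trans (measure_biUnion_finset_le S C)
  have hstep2 : ∀ t ∈ S, graphMeasure τ cF pr n (C t) ≤ F t := by
    rintro ⟨u, v, z⟩ htS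
    rw [hS, Finset.mem_filter] at htS
    obtain ⟨-, huv, huz, hzv, -, -⟩ := htS
    have hab : ((min u z, max u z) : Fin n × Fin n) ≠ (min z v, max z v) :=
      pair_ne' huv huz hzv
    have heq := graphMeasure_pair τ cF pr n (min u z, max u z) (min z v, max z v) hab
    have e1min : min (min u z) (max u z) = min u z := min_eq_left min_le_max
    have e1max : max (min u z) (max u z) = max u z := max_eq_right min_le_max
    have e2min : min (min z v) (max z v) = min z v := min_eq_left min_le_max
    have e2max : max (min z v) (max z v) = max z v := max_eq_right min_le_max
    rw [e1min, e1max, e2min, e2max] at heq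
    have hCt : C (u, v, z) = {ω : Fin n × Fin n → Bool |
        ω (min u z, max u z) = true ∧ ω (min z v, max z v) = true} := rfl
    rw [hCt, heq]
    have hb1 := edge_bound' τ cF pr hcF hα0.le hpr0 n u z
    have hb2' := edge_bound' τ cF pr hcF hα0.le hpr0 n v z
    rw [min_comm v z, max_comm v z] at hb2'
    have hmul := mul_le_mul' hb1 hb2'
    refine hmul.trans ?_
    rw [← ENNReal.ofReal_mul (mul_nonneg hpr0 (hT0 (z.val+1)))]
    rw [hF]
    refine ENNReal.ofReal_le_ofReal (le_of_eq ?_)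
    show (pr * T (z.val+1)) * (pr * T (z.val+1)) = pr^2 * T (z.val+1)^2
    ring
  set A : Finset (Fin n) := Finset.univ.filter (fun u : Fin n => u.val < K) with hA
  have hcardA : A.card ≤ K := by
    have h : A.card ≤ (Finset.range K).card :=
      Finset.card_le_card_of_injOn (fun u : Fin n => u.val)
        (fun u (hu : u ∈ A) => Finset.mem_range.mpr (by
          rw [hA, Finset.mem_filter] at hu
          exact hu.2)) (Fin.val_injective.injOn)
    simpa using h
  have hSsub : S ⊆ A ×ˢ (A ×ˢ Finset.univ) := by
    intro t ht
    rw [hS, Finset.mem_filter] at ht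
    rw [Finset.mem_product, Finset.mem_product]
    exact ⟨by rw [hA, Finset.mem_filter]; exact ⟨Finset.mem_univ _, ht.2.2.2.2.1⟩,
      by rw [hA, Finset.mem_filter]; exact ⟨Finset.mem_univ _, ht.2.2.2.2.2⟩,
      Finset.mem_univ _⟩
  set SB : ℝ≥0∞ := ∑ z : Fin n, ENNReal.ofReal (pr^2 * T (z.val+1)^2) with hSB
  have hstep3 : ∑ t ∈ S, F t ≤ (K:ℝ≥0∞) * ((K:ℝ≥0∞) * SB) := by
    calc ∑ t ∈ S, F t ≤ ∑ t ∈ A ×ˢ (A ×ˢ Finset.univ), F t :=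
          Finset.sum_le_sum_of_subset hSsub
      _ = A.card • (A.card • SB) := by
          rw [Finset.sum_product]
          have hinner : ∀ u ∈ A, ∑ p ∈ A ×ˢ (Finset.univ : Finset (Fin n)),
              F (u, p) = A.card • SB := by
            intro u _
            rw [Finset.sum_product]
            simp only [hF, hSB]
            rw [Finset.sum_const]
          rw [Finset.sum_congr rfl hinner, Finset.sum_const]
      _ ≤ (K:ℝ≥0∞) * ((K:ℝ≥0∞) * SB) := by
          rw [nsmul_eq_mul, nsmul_eq_mul]
          exact mul_le_mul' (by exact_mod_cast Nat.cast_le.mpr hcardA)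
            (mul_le_mul' (by exact_mod_cast Nat.cast_le.mpr hcardA) le_rfl)
  -- evaluate SB
  have hreindex : ∀ (g : ℕ → ℝ≥0∞), ∑ z : Fin n, g (z.val+1) = ∑ k ∈ Finset.Icc 1 n, g k := by
    intro g
    rw [← Finset.Ico_add_one_right_eq_Icc, Finset.sum_Ico_eq_sum_range]
    rw [Fin.sum_univ_eq_sum_range (fun i => g (i+1)) n]
    exact Finset.sum_congr rfl (fun i _ => by rw [Nat.add_comm])
  have hSBeval : SB = ENNReal.ofReal (∑ k ∈ Finset.Icc 1 n, pr^2 * T k^2) := by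
    rw [ENNReal.ofReal_sum_of_nonneg (fun k _ => mul_nonneg (sq_nonneg pr) (sq_nonneg _))]
    rw [hSB]
    exact hreindex (fun k => ENNReal.ofReal (pr^2 * T k^2))
  -- the real-valued estimate
  have h2a : (0:ℝ) < 2*α - 1 := by linarith
  have hSsum : ∑ k ∈ Finset.Icc 1 n, pr^2 * T k^2 ≤ lamn n^2 * C₂ := by
    rw [← Finset.mul_sum]
    have h1 : ∑ k ∈ Finset.Icc 1 n, T k^2 ≤ (a^(1/α) + 2) * (1 + 1/(2*α-1)) :=
      S_bound' α hα1 hα2 a ha0 n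
    have hstep := mul_le_mul_of_nonneg_left h1 (sq_nonneg pr)
    refine hstep.trans ?_
    have hprsq : pr^2 = lamn n^2 * ((n:ℝ)^(-((3-τ)/2)))^2 := by rw [hprdef]; ring
    have hpow2 : ((n:ℝ)^(-((3-τ)/2)))^2 = (n:ℝ)^(-(3-τ)) := by
      rw [← Real.rpow_natCast ((n:ℝ)^(-((3-τ)/2))) 2, ← Real.rpow_mul hn0.le]
      congr 1
      push_cast
      ring
    have hapow : a^(1/α) = cF^(1/α) * (n:ℝ)^(3-τ) := by
      rw [ha, Real.mul_rpow hcF.le (Real.rpow_nonneg hn0.le _), ← Real.rpow_mul hn0.le,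
        hexp]
    have hcancel : (n:ℝ)^(-(3-τ)) * (n:ℝ)^(3-τ) = 1 := by
      rw [← Real.rpow_add hn0]
      norm_num
    have hprle : pr^2 ≤ lamn n^2 := by
      have hle1 : (n:ℝ)^(-((3-τ)/2)) ≤ 1 :=
        Real.rpow_le_one_of_one_le_of_nonpos (by exact_mod_cast hn1) (by linarith)
      have ht2 : ((n:ℝ)^(-((3-τ)/2)))^2 ≤ 1 := by nlinarith [hle1, hnpow0]
      rw [hprdef, mul_pow]
      calc lamn n^2 * ((n:ℝ)^(-((3-τ)/2)))^2 ≤ lamn n^2 * 1 :=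
            mul_le_mul_of_nonneg_left ht2 (sq_nonneg _)
        _ = lamn n^2 := mul_one _
    have key1 : pr^2 * a^(1/α) = lamn n^2 * cF^(1/α) := by
      calc pr^2 * a^(1/α)
          = lamn n^2 * cF^(1/α) * ((n:ℝ)^(-(3-τ)) * (n:ℝ)^(3-τ)) := by
            rw [hprsq, hpow2, hapow]; ring
        _ = lamn n^2 * cF^(1/α) := by rw [hcancel, mul_one]
    have hC1 : (0:ℝ) ≤ 1 + 1/(2*α-1) := by positivity
    calc pr^2 * ((a^(1/α)+2)*(1+1/(2*α-1)))
        = (pr^2 * a^(1/α) + pr^2*2) * (1+1/(2*α-1)) := by ring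
      _ ≤ (lamn n^2 * cF^(1/α) + lamn n^2*2) * (1+1/(2*α-1)) := by
          apply mul_le_mul_of_nonneg_right _ hC1
          rw [key1]
          linarith
      _ = lamn n^2 * C₂ := by rw [hC₂]; ring
  have hfinal : ENNReal.ofReal (r n)
      = (K:ℝ≥0∞) * ((K:ℝ≥0∞) * ENNReal.ofReal (lamn n^2 * C₂)) := by
    rw [hr]
    rw [ENNReal.ofReal_mul (Nat.cast_nonneg K), ENNReal.ofReal_mul (Nat.cast_nonneg K),
      ENNReal.ofReal_natCast]
  calc graphMeasure τ cF pr n {ω : Fin n × Fin n → Bool |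
        ∃ u v z : Fin n, u < v ∧ (v : ℕ) + 1 ≤ K ∧ NRAdj n ω u z ∧ NRAdj n ω z v}
      ≤ ∑ t ∈ S, graphMeasure τ cF pr n (C t) := hstep1
    _ ≤ ∑ t ∈ S, F t := Finset.sum_le_sum hstep2
    _ ≤ (K:ℝ≥0∞) * ((K:ℝ≥0∞) * SB) := hstep3
    _ = (K:ℝ≥0∞) * ((K:ℝ≥0∞) * ENNReal.ofReal (∑ k ∈ Finset.Icc 1 n, pr^2 * T k^2)) := by
        rw [hSBeval]
    _ ≤ (K:ℝ≥0∞) * ((K:ℝ≥0∞) * ENNReal.ofReal (lamn n^2 * C₂)) :=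
        mul_le_mul' le_rfl (mul_le_mul' le_rfl (ENNReal.ofReal_le_ofReal hSsum))
    _ = ENNReal.ofReal (r n) := hfinal.symm
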